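/- The function η ↦ (f(η) + η)² / g(η), with f(η) = (1/√π) · exp(−η²)/(1 + erf(η)) and g(η) = 1 − 2 f(η)(f(η) + η), is monotone increasing on [0, ∞); consequently 1 − 2(f(η)+η)²/g(η) ≤ 1 − (2/π)/(1 − 2/π) = (π − 4)/(π − 2) for all η ≥ 0. -/

import Mathlib

open Real

noncomputable def erf (z : ℝ) : ℝ := (2 / Real.sqrt π) * ∫ s in (0:ℝ)..z, Real.exp (-s^2)

noncomputable def f (η : ℝ) : ℝ := (1 / Real.sqrt π) * Real.exp (-η^2) / (1 + erf η)

noncomputable def g (η : ℝ) : ℝ := 1 - 2 * f η * (f η + η)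

noncomputable def hfun (η : ℝ) : ℝ := (f η + η) * (2 * f η + η)

lemma erf_hasDerivAt (x : ℝ) : HasDerivAt erf (2 / Real.sqrt π * Real.exp (-x^2)) x := by
  have hc : Continuous fun s : ℝ => Real.exp (-s^2) := by continuity
  have h1 : HasDerivAt (fun z : ℝ => ∫ s in (0:ℝ)..z, Real.exp (-s^2)) (Real.exp (-x^2)) x :=
    intervalIntegral.integral_hasDerivAt_right (hc.intervalIntegrable 0 x)
      (hc.stronglyMeasurable.stronglyMeasurableAtFilter)  hc.continuousAt
  exact h1.const_mul (2 / Real.sqrt π)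

lemma erf_zero : erf 0 = 0 := by simp [erf]

lemma erf_nonneg {x : ℝ} (hx : 0 ≤ x) : 0 ≤ erf x := by
  apply mul_nonneg (by positivity)
  exact intervalIntegral.integral_nonneg hx (fun s _ => (Real.exp_pos _).le)

lemma one_add_erf_pos {x : ℝ} (hx : 0 ≤ x) : 0 < 1 + erf x := by
  have := erf_nonneg hx; linarith

noncomputable def mfun (η : ℝ) : ℝ := Real.sqrt π * Real.exp (η^2) * (1 + erf η)

lemma sqrt_pi_pos : 0 < Real.sqrt π := Real.sqrt_pos.2 Real.pi_pos

lemma sqrt_pi_ge : (1.77:ℝ) ≤ Real.sqrt π := by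
  rw [show (1.77:ℝ) = Real.sqrt (1.77^2) by rw [Real.sqrt_sq]; norm_num]
  apply Real.sqrt_le_sqrt
  nlinarith [Real.pi_gt_d6]

lemma mfun_pos {x : ℝ} (hx : 0 ≤ x) : 0 < mfun x := by
  have := one_add_erf_pos hx
  have := Real.exp_pos (x^2)
  have := sqrt_pi_pos
  unfold mfun; positivity

lemma f_eq {x : ℝ} (hx : 0 ≤ x) : f x = 1 / mfun x := by
  have h1 := (one_add_erf_pos hx).ne'
  have h2 := (Real.exp_pos (x^2)).ne'
  have h3 := sqrt_pi_pos.ne'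
  rw [f, mfun, Real.exp_neg]
  field_simp

lemma mfun_hasDerivAt (x : ℝ) : HasDerivAt mfun (2*x*mfun x + 2) x := by
  have h1 : HasDerivAt (fun η : ℝ => Real.exp (η^2)) (Real.exp (x^2) * (2*x)) x := by
    have := (hasDerivAt_pow 2 x).exp
    norm_num at this
    simpa [pow_one, mul_comm] using this
  have h2 : HasDerivAt (fun η : ℝ => 1 + erf η) (2 / Real.sqrt π * Real.exp (-x^2)) x :=
    (erf_hasDerivAt x).const_add 1
  have h3 := ((h1.const_mul (Real.sqrt π)).mul h2)
  refine (h3 : HasDerivAt mfun _ x).congr_deriv (Eq.symm ?_)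
  have h3' := sqrt_pi_pos.ne'
  rw [mfun, Real.exp_neg]
  have h2' := (Real.exp_pos (x^2)).ne'
  field_simp

lemma mfun_cont : Continuous mfun :=
  Differentiable.continuous (fun x => (mfun_hasDerivAt x).differentiableAt)

lemma mfun_zero : mfun 0 = Real.sqrt π := by simp [mfun, erf_zero]

lemma mfun_ge_sqrt {x : ℝ} (hx : 0 ≤ x) : Real.sqrt π ≤ mfun x := by
  have h1 := one_add_erf_pos hx
  have h2 := erf_nonneg hx
  have h3 := Real.one_le_exp (sq_nonneg x)
  have h4 := sqrt_pi_pos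
  rw [mfun]
  nlinarith [mul_nonneg (mul_nonneg h4.le (sub_nonneg.2 h3)) h1.le,
    mul_nonneg h4.le h2]

lemma gron (P P' : ℝ → ℝ) (hP : ∀ y, HasDerivAt P (P' y) y)
    (h0 : P 0 ≤ mfun 0)
    (hstep : ∀ y : ℝ, 0 < y → P' y ≤ 2*y*mfun y + 2) :
    ∀ x : ℝ, 0 ≤ x → P x ≤ mfun x := by
  intro x hx
  have hmono : MonotoneOn (fun η => mfun η - P η) (Set.Ici (0:ℝ)) := by
    apply monotoneOn_of_deriv_nonneg (convex_Ici 0)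
    · exact (mfun_cont.sub (Differentiable.continuous (fun y => (hP y).differentiableAt))).continuousOn
    · intro y hy
      exact ((mfun_hasDerivAt y).sub (hP y)).differentiableAt.differentiableWithinAt
    · intro y hy
      rw [interior_Ici] at hy
      rw [show deriv (fun η => mfun η - P η) y = _ from ((mfun_hasDerivAt y).sub (hP y)).deriv]
      have := hstep y hy
      linarith
  have := hmono (Set.self_mem_Ici) hx hx
  simp only at this
  linarith

lemma mfun_ge_L1 {x : ℝ} (hx : 0 ≤ x) :
    Real.sqrt π + (2*x + Real.sqrt π * x^2) ≤ mfun x := by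
  refine gron (fun η => Real.sqrt π + (2*η + Real.sqrt π * η^2)) (fun y => 2*1 + Real.sqrt π * (2*y^1)) (fun y => ?_) ?_ (fun y hy => ?_) x hx
  · refine HasDerivAt.const_add _ ?_
    have h1 := ((hasDerivAt_id y).const_mul 2)
    have h2 := ((hasDerivAt_pow 2 y).const_mul (Real.sqrt π))
    exact h1.add (h2.congr_deriv (by push_cast; ring))
  · rw [mfun_zero]; norm_num
  · have := mfun_ge_sqrt hy.le
    nlinarith

lemma mfun_ge_L2 {x : ℝ} (hx : 0 ≤ x) :
    Real.sqrt π + (2*x + Real.sqrt π * x^2 + (4/3)*x^3 + (Real.sqrt π/2) * x^4) ≤ mfun x := by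
  refine gron (fun η => Real.sqrt π + (2*η + Real.sqrt π * η^2 + (4/3)*η^3 + (Real.sqrt π/2) * η^4)) (fun y => 2*1 + Real.sqrt π * (2*y^1) + (4/3)*(3*y^2) + (Real.sqrt π/2) * (4*y^3))
    (fun y => ?_) ?_ (fun y hy => ?_) x hx
  · refine HasDerivAt.const_add _ ?_
    have h1 := ((hasDerivAt_id y).const_mul 2)
    have h2 := ((hasDerivAt_pow 2 y).const_mul (Real.sqrt π))
    have h3 := ((hasDerivAt_pow 3 y).const_mul ((4:ℝ)/3))
    have h4 := ((hasDerivAt_pow 4 y).const_mul (Real.sqrt π/2))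
    exact ((h1.add (h2.congr_deriv (by push_cast; ring))).add
      (h3.congr_deriv (by push_cast; ring))).add (h4.congr_deriv (by push_cast; ring))
  · rw [mfun_zero]; norm_num
  · have := mfun_ge_L1 hy.le
    nlinarith

set_option maxHeartbeats 2000000 in
lemma keyQ (e m : ℝ) (he : 0 ≤ e)
    (hm : 1.77 + 2*e + 1.77*e^2 + (4/3)*e^3 + (22/25)*e^4 ≤ m) :
    0 ≤ (m^2-2*e*m-2)^2 + (1+e*m)*(m^2-2*e*m-2) - 2*(1+e*m)^3 := by
  have ht : 0 ≤ m - (1.77 + 2*e + 1.77*e^2 + (4/3)*e^3 + (22/25)*e^4) := by linarith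
  linarith [mul_nonneg (pow_nonneg he 0) (pow_nonneg ht 1),
    mul_nonneg (pow_nonneg he 0) (pow_nonneg ht 2),
    mul_nonneg (pow_nonneg he 0) (pow_nonneg ht 3),
    mul_nonneg (pow_nonneg he 0) (pow_nonneg ht 4),
    mul_nonneg (pow_nonneg he 1) (pow_nonneg ht 0),
    mul_nonneg (pow_nonneg he 1) (pow_nonneg ht 1),
    mul_nonneg (pow_nonneg he 1) (pow_nonneg ht 2),
    mul_nonneg (pow_nonneg he 1) (pow_nonneg ht 3),
    mul_nonneg (pow_nonneg he 2) (pow_nonneg ht 0),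
    mul_nonneg (pow_nonneg he 2) (pow_nonneg ht 1),
    mul_nonneg (pow_nonneg he 2) (pow_nonneg ht 2),
    mul_nonneg (pow_nonneg he 2) (pow_nonneg ht 3),
    mul_nonneg (pow_nonneg he 3) (pow_nonneg ht 0),
    mul_nonneg (pow_nonneg he 3) (pow_nonneg ht 1),
    mul_nonneg (pow_nonneg he 3) (pow_nonneg ht 2),
    mul_nonneg (pow_nonneg he 3) (pow_nonneg ht 3),
    mul_nonneg (pow_nonneg he 4) (pow_nonneg ht 0),
    mul_nonneg (pow_nonneg he 4) (pow_nonneg ht 1),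
    mul_nonneg (pow_nonneg he 4) (pow_nonneg ht 2),
    mul_nonneg (pow_nonneg he 4) (pow_nonneg ht 3),
    mul_nonneg (pow_nonneg he 5) (pow_nonneg ht 0),
    mul_nonneg (pow_nonneg he 5) (pow_nonneg ht 1),
    mul_nonneg (pow_nonneg he 5) (pow_nonneg ht 2),
    mul_nonneg (pow_nonneg he 6) (pow_nonneg ht 0),
    mul_nonneg (pow_nonneg he 6) (pow_nonneg ht 1),
    mul_nonneg (pow_nonneg he 6) (pow_nonneg ht 2),
    mul_nonneg (pow_nonneg he 7) (pow_nonneg ht 0),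
    mul_nonneg (pow_nonneg he 7) (pow_nonneg ht 1),
    mul_nonneg (pow_nonneg he 7) (pow_nonneg ht 2),
    mul_nonneg (pow_nonneg he 8) (pow_nonneg ht 0),
    mul_nonneg (pow_nonneg he 8) (pow_nonneg ht 1),
    mul_nonneg (pow_nonneg he 8) (pow_nonneg ht 2),
    mul_nonneg (pow_nonneg he 9) (pow_nonneg ht 0),
    mul_nonneg (pow_nonneg he 9) (pow_nonneg ht 1),
    mul_nonneg (pow_nonneg he 10) (pow_nonneg ht 0),
    mul_nonneg (pow_nonneg he 10) (pow_nonneg ht 1),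
    mul_nonneg (pow_nonneg he 11) (pow_nonneg ht 0),
    mul_nonneg (pow_nonneg he 11) (pow_nonneg ht 1),
    mul_nonneg (pow_nonneg he 12) (pow_nonneg ht 0),
    mul_nonneg (pow_nonneg he 12) (pow_nonneg ht 1),
    mul_nonneg (pow_nonneg he 13) (pow_nonneg ht 0),
    mul_nonneg (pow_nonneg he 14) (pow_nonneg ht 0),
    mul_nonneg (pow_nonneg he 15) (pow_nonneg ht 0),
    mul_nonneg (pow_nonneg he 16) (pow_nonneg ht 0)]

lemma mfun_lb {x : ℝ} (hx : 0 ≤ x) :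
    1.77 + 2*x + 1.77*x^2 + (4/3)*x^3 + (22/25)*x^4 ≤ mfun x := by
  have h := mfun_ge_L2 hx
  have hs := sqrt_pi_ge
  nlinarith [pow_nonneg hx 2, pow_nonneg hx 4]

lemma A_pos {x : ℝ} (hx : 0 ≤ x) : 0 < mfun x^2 - 2*x*mfun x - 2 := by
  have h := mfun_lb hx
  have h2 : (1.77:ℝ) + x ≤ mfun x - x := by nlinarith [pow_nonneg hx 2, pow_nonneg hx 3, pow_nonneg hx 4]
  have h3 := mul_le_mul h2 h2 (by linarith) (by linarith)
  nlinarith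

lemma g_eq {x : ℝ} (hx : 0 ≤ x) : g x = (mfun x^2 - 2*x*mfun x - 2)/mfun x^2 := by
  have hm := (mfun_pos hx).ne'
  rw [g, f_eq hx]
  field_simp
  ring

lemma g_pos {x : ℝ} (hx : 0 ≤ x) : 0 < g x := by
  rw [g_eq hx]
  exact div_pos (A_pos hx) (pow_pos (mfun_pos hx) 2)

lemma f_pos {x : ℝ} (hx : 0 ≤ x) : 0 < f x := by
  rw [f_eq hx]
  exact div_pos one_pos (mfun_pos hx)

lemma crucial {x : ℝ} (hx : 0 ≤ x) :
    0 ≤ g x^2 + f x * g x * (f x + x) - 2 * f x * (f x + x)^3 := by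
  have hm := (mfun_pos hx).ne'
  have hQ := keyQ x (mfun x) hx (mfun_lb hx)
  have hrw : g x^2 + f x * g x * (f x + x) - 2 * f x * (f x + x)^3
      = ((mfun x^2-2*x*mfun x-2)^2 + (1+x*mfun x)*(mfun x^2-2*x*mfun x-2)
          - 2*(1+x*mfun x)^3) / mfun x^4 := by
    rw [g, f_eq hx]
    field_simp
    ring
  rw [hrw]
  exact div_nonneg hQ (by positivity)

lemma f_hasDerivAt {x : ℝ} (hx : 0 ≤ x) : HasDerivAt f (-2 * f x * (f x + x)) x := by
  have hD : (1 + erf x) ≠ 0 := (one_add_erf_pos hx).ne'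
  have hN : HasDerivAt (fun η : ℝ => (1/Real.sqrt π) * Real.exp (-η^2))
      ((1/Real.sqrt π) * (Real.exp (-x^2) * (-(2*x)))) x := by
    have h0 : HasDerivAt (fun η : ℝ => -η^2) (-(2*x)) x :=
      ((hasDerivAt_pow 2 x).neg).congr_deriv (by push_cast; ring)
    exact (h0.exp).const_mul _
  have hE : HasDerivAt (fun η : ℝ => 1 + erf η) (2/Real.sqrt π * Real.exp (-x^2)) x :=
    (erf_hasDerivAt x).const_add 1
  have h := hN.div hE hD
  refine (h : HasDerivAt f _ x).congr_deriv (Eq.symm ?_)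
  simp only [f]
  have h1 := sqrt_pi_pos.ne'
  field_simp
  ring

lemma u_hasDerivAt {x : ℝ} (hx : 0 ≤ x) : HasDerivAt (fun η => f η + η) (g x) x := by
  have h := (f_hasDerivAt hx).add (hasDerivAt_id x)
  refine (h : HasDerivAt (fun η => f η + η) _ x).congr_deriv (Eq.symm ?_)
  rw [g]; ring

lemma g_hasDerivAt {x : ℝ} (hx : 0 ≤ x) :
    HasDerivAt g (-((2 * (-2 * f x * (f x + x))) * (f x + x) + (2 * f x) * g x)) x := by
  have h := (((f_hasDerivAt hx).const_mul 2).mul (u_hasDerivAt hx)).const_sub 1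
  exact h

lemma F_hasDerivAt {x : ℝ} (hx : 0 ≤ x) :
    HasDerivAt (fun η => (f η + η)^2 / g η)
      (2*(f x + x) * (g x^2 + f x * g x * (f x + x) - 2 * f x * (f x + x)^3) / g x^2) x := by
  have hgne := (g_pos hx).ne'
  have hu2 : HasDerivAt (fun η => (f η + η)^2) ((2:ℕ) * (f x + x)^1 * g x) x :=
    (u_hasDerivAt hx).pow 2
  have h := hu2.div (g_hasDerivAt hx) hgne
  refine (h : HasDerivAt (fun η => (f η + η)^2 / g η) _ x).congr_deriv (Eq.symm ?_)
  field_simp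
  ring

theorem stmt7 : MonotoneOn (fun η => (f η + η)^2 / g η) (Set.Ici (0:ℝ)) ∧
    ∀ η : ℝ, 0 ≤ η → 1 - 2 * (f η + η)^2 / g η ≤ (π - 4) / (π - 2) := by
  have hmono : MonotoneOn (fun η => (f η + η)^2 / g η) (Set.Ici (0:ℝ)) := by
    apply monotoneOn_of_deriv_nonneg (convex_Ici 0)
    · intro x hx
      exact (F_hasDerivAt hx).continuousAt.continuousWithinAt
    · intro x hx
      rw [interior_Ici] at hx
      exact (F_hasDerivAt hx.le).differentiableAt.differentiableWithinAt
    · intro x hx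
      rw [interior_Ici] at hx
      rw [(F_hasDerivAt hx.le).deriv]
      apply div_nonneg _ (sq_nonneg _)
      apply mul_nonneg _ (crucial hx.le)
      have := f_pos hx.le
      have hx' : 0 < x := hx
      linarith
  refine ⟨hmono, fun η hη => ?_⟩
  have h0 : (f 0 + 0)^2 / g 0 ≤ (f η + η)^2 / g η := hmono Set.self_mem_Ici hη hη
  have hπ : (2:ℝ) < π := by nlinarith [Real.pi_gt_d6]
  have hsq : Real.sqrt π * Real.sqrt π = π := Real.mul_self_sqrt Real.pi_pos.le
  have hf0 : f 0 = 1/Real.sqrt π := by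
    rw [f, erf_zero]; norm_num
  have hF0 : (f 0 + 0)^2 / g 0 = 1/(π - 2) := by
    rw [g, hf0]
    have h1 := sqrt_pi_pos.ne'
    have h2 : π - 2 ≠ 0 := by linarith
    have h3 : π ≠ 0 := by linarith
    field_simp
    simp only [mul_zero, add_zero, one_pow, one_mul, Real.sq_sqrt Real.pi_pos.le]
    exact div_self h2
  rw [hF0] at h0
  have hgoal : (π - 4)/(π - 2) = 1 - 2 * (1/(π-2)) := by
    have h2 : π - 2 ≠ 0 := by linarith
    field_simp
    ring
  rw [hgoal, mul_div_assoc]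
  linarith
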